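/- Let d ≥ 2 be an integer, p ∈ [2,∞], and let U ⊆ [-1/2,1/2)^d be a finite set with 0 ∈ U. Suppose there are r affine hyperplanes H_1,…,H_r in ℝ^d, none containing 0, such that U\{0} ⊆ H_1 ∪ ⋯ ∪ H_r, and let η_k > 0 denote the Euclidean (ℓ²) distance from 0 to H_k. Fix a real n > 0 with max_{1≤k≤r} η_k ≤ (r+1)/(4n), and assume that for each k there exists a nonzero q_k ∈ ℤ^d that is a normal vector of H_k (i.e., q_k is orthogonal to the direction of H_k) with |q_k|₂ ≤ n/(r+1). Then there exists a trigonometric polynomial f ∈ P(Ω_n^p) such that f(0) = 1, f(u) = 0 for all u ∈ U\{0}, and ‖f‖_{L²(𝕋^d)} ≤ √(2^r / |Ω^p_{n/(r+1)}|_*) · ∏_{k=1}^r 1/(4·|q_k|₂·η_k), where |Ω^p_{n/(r+1)}|_* = #(Ω^p_{n/(r+1)} ∩ ℤ^d). -/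

import Mathlib

open MeasureTheory Finset
open scoped ENNReal Classical BigOperators

noncomputable section

namespace NF

variable {d : ℕ} {ι : Type*} [Fintype ι]

/-- ℓ^p norm on ℝ^d for p ∈ [1,∞] (encoded in ℝ≥0∞). -/
def lpnorm (p : ℝ≥0∞) (x : Fin d → ℝ) : ℝ :=
  if p = ∞ then ⨆ i, |x i| else (∑ i, |x i| ^ p.toReal) ^ (1 / p.toReal)

/-- the closed ℓ^p ball Ω_m^p. -/
def lpBall (d : ℕ) (p : ℝ≥0∞) (m : ℝ) : Set (Fin d → ℝ) := {x | lpnorm p x ≤ m}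

def dotR (ω x : Fin d → ℝ) : ℝ := ∑ i, ω i * x i

def l2norm (u : ι → ℂ) : ℝ := Real.sqrt (∑ k, ‖u k‖ ^ 2)

/-- the nonharmonic Fourier transform of u, as a function of ω. -/
def Fop (x : ι → Fin d → ℝ) (u : ι → ℂ) (ω : Fin d → ℝ) : ℂ :=
  ∑ k, u k * Complex.exp (-(2 * Real.pi * Complex.I) * (dotR ω (x k) : ℝ))

/-- its L²(Ω) norm -/
def FopNorm (Ω : Set (Fin d → ℝ)) (x : ι → Fin d → ℝ) (u : ι → ℂ) : ℝ :=
  Real.sqrt (∫ ω in Ω, ‖Fop x u ω‖ ^ 2)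

def sigmaMinF (Ω : Set (Fin d → ℝ)) (x : ι → Fin d → ℝ) : ℝ :=
  ⨅ u : {u : ι → ℂ // l2norm u = 1}, FopNorm Ω x u

def sigmaMaxF (Ω : Set (Fin d → ℝ)) (x : ι → Fin d → ℝ) : ℝ :=
  ⨆ u : {u : ι → ℂ // l2norm u = 1}, FopNorm Ω x u

def intPt (ω : Fin d → ℤ) : Fin d → ℝ := fun i => (ω i : ℝ)

/-- squared ℓ² norm of Φ_{Ω,X} u, summing over integer points of Ω. -/
def PhiSq (Ω : Set (Fin d → ℝ)) (x : ι → Fin d → ℝ) (u : ι → ℂ) : ℝ :=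
  ∑' ω : Fin d → ℤ, if intPt ω ∈ Ω then ‖Fop x u (intPt ω)‖ ^ 2 else 0

def PhiNorm (Ω : Set (Fin d → ℝ)) (x : ι → Fin d → ℝ) (u : ι → ℂ) : ℝ :=
  Real.sqrt (PhiSq Ω x u)

def sigmaMinPhi (Ω : Set (Fin d → ℝ)) (x : ι → Fin d → ℝ) : ℝ :=
  ⨅ u : {u : ι → ℂ // l2norm u = 1}, PhiNorm Ω x u

def sigmaMaxPhi (Ω : Set (Fin d → ℝ)) (x : ι → Fin d → ℝ) : ℝ :=
  ⨆ u : {u : ι → ℂ // l2norm u = 1}, PhiNorm Ω x u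

/-- torus ℓ^p distance. -/
def torusDist (p : ℝ≥0∞) (x y : Fin d → ℝ) : ℝ :=
  ⨅ n : Fin d → ℤ, lpnorm p (fun i => x i - y i + (n i : ℝ))

/-- fundamental domain [-1/2,1/2)^d of the torus. -/
def cube (d : ℕ) : Set (Fin d → ℝ) := Set.univ.pi fun _ => Set.Ico (-(1:ℝ)/2) (1/2)

def torusL2 (f : (Fin d → ℝ) → ℂ) : ℝ := Real.sqrt (∫ x in cube d, ‖f x‖ ^ 2)

def fullL2 (f : (Fin d → ℝ) → ℂ) : ℝ := Real.sqrt (∫ x, ‖f x‖ ^ 2)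

/-- membership in the Paley–Wiener space W(Ω). -/
def IsBandlimited (Ω : Set (Fin d → ℝ)) (f : (Fin d → ℝ) → ℂ) : Prop :=
  ∃ F : (Fin d → ℝ) → ℂ, MemLp F 2 (volume.restrict Ω) ∧
    ∀ x, f x = ∫ ω in Ω, F ω * Complex.exp ((2 * Real.pi * Complex.I) * (dotR ω x : ℝ))

/-- membership in P(Ω): trigonometric polynomials with frequencies in Ω ∩ ℤ^d. -/
def IsTrigPoly (Ω : Set (Fin d → ℝ)) (f : (Fin d → ℝ) → ℂ) : Prop :=
  ∃ c : (Fin d → ℤ) → ℂ, (Function.support c).Finite ∧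
    (∀ ω, c ω ≠ 0 → intPt ω ∈ Ω) ∧
    ∀ x, f x = ∑' ω : Fin d → ℤ, c ω * Complex.exp ((2 * Real.pi * Complex.I) * (dotR (intPt ω) x : ℝ))

/-- |Ω|_* = #(Ω ∩ ℤ^d). -/
def intCard (Ω : Set (Fin d → ℝ)) : ℕ := Set.ncard {ω : Fin d → ℤ | intPt ω ∈ Ω}

/-- τ local sparsity ν_p(τ,X) for an indexed family. -/
def localSparsity (p : ℝ≥0∞) (τ : ℝ) (x : ι → Fin d → ℝ) : ℕ :=
  Finset.univ.sup fun k => (Finset.univ.filter fun j => torusDist p (x j) (x k) ≤ τ).card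

/-- τ local sparsity ν_p(τ,X) for a finite set. -/
def finsetSparsity (p : ℝ≥0∞) (τ : ℝ) (X : Finset (Fin d → ℝ)) : ℕ :=
  X.sup fun x => (X.filter fun y => torusDist p y x ≤ τ).card

/-- minimum torus ℓ^p separation of a finite set. -/
def finsetSep (p : ℝ≥0∞) (X : Finset (Fin d → ℝ)) : ℝ :=
  sInf {r | ∃ x ∈ X, ∃ y ∈ X, x ≠ y ∧ torusDist p x y = r}

/-- Fourier transform of a real-valued function on ℝ^d. -/
def FT (f : (Fin d → ℝ) → ℝ) (ξ : Fin d → ℝ) : ℂ :=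
  ∫ x, (f x : ℂ) * Complex.exp (-(2 * Real.pi * Complex.I) * (dotR ξ x : ℝ))


/-- X consists of clumps with parameters (p,τ,λ) in the torus ℓ^p metric. -/
def ConsistsOfClumps (p : ℝ≥0∞) (τ : ℝ) (lam : ℕ) (X : Finset (Fin d → ℝ)) : Prop :=
  ∃ r : ℕ, 0 < r ∧ ∃ C : Fin r → Finset (Fin d → ℝ),
    (∀ k, (C k).card = lam) ∧
    (∀ k l, k ≠ l → Disjoint (C k) (C l)) ∧
    Finset.univ.biUnion C = X ∧
    (∀ k, ∀ x ∈ C k, ∀ y ∈ C k, torusDist p x y ≤ τ) ∧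
    (1 < r → ∀ k l, k ≠ l → ∀ x ∈ C k, ∀ y ∈ C l, τ < torusDist p x y)

-- character
def eChar (ν x : Fin d → ℝ) : ℂ := Complex.exp ((2 * Real.pi * Complex.I) * (dotR ν x : ℝ))

lemma intPt_add (a b : Fin d → ℤ) : intPt (a + b) = intPt a + intPt b := by
  funext i; simp [intPt]

lemma intPt_sum {α : Type*} (T : Finset α) (q : α → Fin d → ℤ) :
    intPt (∑ k ∈ T, q k) = ∑ k ∈ T, intPt (q k) := by
  classical
  induction T using Finset.induction with
  | empty => funext i; simp [intPt]
  | insert _ _ h ih => rw [Finset.sum_insert h, Finset.sum_insert h, intPt_add, ih]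

lemma dotR_add (a b x : Fin d → ℝ) : dotR (a + b) x = dotR a x + dotR b x := by
  simp [dotR, add_mul, Finset.sum_add_distrib]

lemma dotR_zero_right (ν : Fin d → ℝ) : dotR ν 0 = 0 := by simp [dotR]

lemma dotR_neg (a x : Fin d → ℝ) : dotR (-a) x = -dotR a x := by
  simp [dotR, Finset.sum_neg_distrib]

lemma eChar_add (a b x : Fin d → ℝ) : eChar (a + b) x = eChar a x * eChar b x := by
  rw [eChar, eChar, eChar, dotR_add, ← Complex.exp_add]
  congr 1; push_cast; ring

lemma eChar_zero_right (ν : Fin d → ℝ) : eChar ν 0 = 1 := by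
  rw [eChar, dotR_zero_right]; simp

lemma norm_eChar (ν x : Fin d → ℝ) : ‖eChar ν x‖ = 1 := by
  rw [eChar]
  have h1 : (2 * Real.pi * Complex.I) * ((dotR ν x : ℝ):ℂ)
      = ((2 * Real.pi * dotR ν x : ℝ) : ℂ) * Complex.I := by push_cast; ring
  rw [h1, Complex.norm_exp_ofReal_mul_I]

lemma conj_eChar (ν x : Fin d → ℝ) :
    (starRingEnd ℂ) (eChar ν x) = eChar (-ν) x := by
  rw [eChar, eChar, ← Complex.exp_conj, dotR_neg]
  congr 1
  rw [map_mul, map_mul, map_mul, Complex.conj_I, Complex.conj_ofReal,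
    map_ofNat, Complex.conj_ofReal]
  push_cast; ring

lemma continuous_eChar (ν : Fin d → ℝ) : Continuous (fun x => eChar ν x) := by
  unfold eChar dotR
  continuity

lemma cube_measurable : MeasurableSet (cube d) :=
  MeasurableSet.univ_pi fun _ => measurableSet_Ico

lemma cube_volume_lt_top : volume (cube d) < ∞ := by
  rw [cube, volume_pi_pi]
  simp [Real.volume_Ico]

lemma integrableOn_cube_of_continuous {E : Type*} [NormedAddCommGroup E]
    {F : (Fin d → ℝ) → E} (hF : Continuous F) :
    IntegrableOn F (cube d) := by
  have hsub : cube d ⊆ Set.univ.pi fun _ : Fin d => Set.Icc (-(1:ℝ)/2) (1/2) := by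
    intro x hx i _
    exact Set.Ico_subset_Icc_self (hx i (Set.mem_univ i))
  have hcomp : IsCompact (Set.univ.pi fun _ : Fin d => Set.Icc (-(1:ℝ)/2) (1/2)) :=
    isCompact_univ_pi fun _ => isCompact_Icc
  exact (hF.continuousOn.integrableOn_compact hcomp).mono_set hsub

lemma oneD (m : ℤ) :
    ∫ x in Set.Ico (-(1:ℝ)/2) (1/2), Complex.exp ((2 * Real.pi * Complex.I) * ((m:ℝ) * x)) =
      if m = 0 then 1 else 0 := by
  rcases eq_or_ne m 0 with hm | hm
  · subst hm
    simp [MeasureTheory.setIntegral_const, Real.volume_Ico]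
    norm_num
  · rw [if_neg hm]
    rw [MeasureTheory.setIntegral_congr_set MeasureTheory.Ico_ae_eq_Ioc,
        ← intervalIntegral.integral_of_le (by norm_num : (-(1:ℝ)/2) ≤ 1/2)]
    have hc : (2 * Real.pi * Complex.I * (m:ℝ)) ≠ 0 := by
      simp [Real.pi_ne_zero, Complex.I_ne_zero, hm]
    have : ∀ x : ℝ, (2 * Real.pi * Complex.I) * ((m:ℝ) * x) = (2 * Real.pi * Complex.I * (m:ℝ)) * x := by
      intro x; ring
    simp_rw [this]
    rw [integral_exp_mul_complex hc]
    have key : Complex.exp (2 * Real.pi * Complex.I * (m:ℝ) * (((1:ℝ)/2 : ℝ):ℂ)) =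
        Complex.exp (2 * Real.pi * Complex.I * (m:ℝ) * (((-1:ℝ)/2 : ℝ):ℂ)) := by
      rw [Complex.exp_eq_exp_iff_exists_int]
      exact ⟨m, by push_cast; ring⟩
    rw [key]
    simp

lemma cube_orth (m : Fin d → ℤ) :
    ∫ x in cube d, eChar (intPt m) x = if m = 0 then 1 else 0 := by
  have hexp : ∀ x : Fin d → ℝ,
      eChar (intPt m) x = ∏ i, Complex.exp ((2 * Real.pi * Complex.I) * ((m i : ℝ) * x i)) := by
    intro x
    rw [eChar, ← Complex.exp_sum]
    congr 1
    rw [dotR]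
    push_cast
    rw [Finset.mul_sum]
    simp [intPt]
  simp_rw [hexp]
  rw [← MeasureTheory.integral_indicator cube_measurable]
  have hind : ∀ x : Fin d → ℝ,
      (cube d).indicator (fun x => ∏ i, Complex.exp ((2 * Real.pi * Complex.I) * ((m i : ℝ) * x i))) x
      = ∏ i, (Set.Ico (-(1:ℝ)/2) (1/2)).indicator
          (fun t => Complex.exp ((2 * Real.pi * Complex.I) * ((m i : ℝ) * t))) (x i) := by
    intro x
    by_cases hx : x ∈ cube d
    · rw [Set.indicator_of_mem hx]
      have : ∀ i, x i ∈ Set.Ico (-(1:ℝ)/2) (1/2) := fun i => hx i (Set.mem_univ i)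
      exact Finset.prod_congr rfl fun i _ => by rw [Set.indicator_of_mem (this i)]
    · rw [Set.indicator_of_notMem hx]
      rw [cube, Set.mem_pi] at hx
      push_neg at hx
      obtain ⟨i, -, hi⟩ := hx
      rw [eq_comm]
      apply Finset.prod_eq_zero (mem_univ i)
      rw [Set.indicator_of_notMem hi]
  simp_rw [hind]
  rw [MeasureTheory.volume_pi]
  rw [MeasureTheory.integral_fintype_prod_eq_prod (ι := Fin d)
    (f := fun i t => (Set.Ico (-(1:ℝ)/2) (1/2)).indicator
      (fun t => Complex.exp ((2 * Real.pi * Complex.I) * ((m i : ℝ) * t))) t)]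
  have h1 : ∀ i, (∫ t : ℝ, (Set.Ico (-(1:ℝ)/2) (1/2)).indicator
      (fun t => Complex.exp ((2 * Real.pi * Complex.I) * ((m i : ℝ) * t))) t)
      = if m i = 0 then 1 else 0 := by
    intro i
    rw [MeasureTheory.integral_indicator measurableSet_Ico]
    exact oneD (m i)
  simp_rw [h1]
  by_cases hm : m = 0
  · subst hm; simp
  · rw [if_neg hm]
    obtain ⟨i, hi⟩ := Function.ne_iff.mp hm
    exact Finset.prod_eq_zero (mem_univ i) (by rw [if_neg (by simpa using hi)])

lemma integral_dirichlet_sq (S : Finset (Fin d → ℤ)) :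
    ∫ x in cube d, ‖∑ ω ∈ S, eChar (intPt ω) x‖^2 = (S.card : ℝ) := by
  set G : (Fin d → ℝ) → ℂ := fun x => ∑ ω ∈ S, eChar (intPt ω) x with hG
  have hpt : ∀ x, ((‖G x‖^2 : ℝ) : ℂ) = ∑ ω ∈ S, ∑ ω' ∈ S, eChar (intPt (ω - ω')) x := by
    intro x
    have h1 : ((‖G x‖^2 : ℝ) : ℂ) = G x * (starRingEnd ℂ) (G x) := by
      rw [Complex.mul_conj, ← Complex.sq_norm]
    rw [h1, hG]
    rw [map_sum, Finset.sum_mul_sum]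
    apply Finset.sum_congr rfl
    intro ω _
    apply Finset.sum_congr rfl
    intro ω' _
    rw [conj_eChar, show ω - ω' = ω + (-ω') from sub_eq_add_neg _ _, intPt_add, eChar_add,
      show intPt (-ω') = -intPt ω' by funext i; simp [intPt]]
  have hInt : ∀ ω ω' : Fin d → ℤ, IntegrableOn (fun x => eChar (intPt (ω - ω')) x) (cube d) :=
    fun ω ω' => integrableOn_cube_of_continuous (continuous_eChar _)
  have h2 : (∫ x in cube d, ((‖G x‖^2 : ℝ) : ℂ)) = (S.card : ℂ) := by
    calc (∫ x in cube d, ((‖G x‖^2 : ℝ) : ℂ))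
        = ∫ x in cube d, ∑ ω ∈ S, ∑ ω' ∈ S, eChar (intPt (ω - ω')) x := by
          exact MeasureTheory.integral_congr_ae (Filter.Eventually.of_forall hpt)
      _ = ∑ ω ∈ S, ∑ ω' ∈ S, ∫ x in cube d, eChar (intPt (ω - ω')) x := by
          rw [MeasureTheory.integral_finset_sum _ (fun ω _ => MeasureTheory.integrable_finset_sum _ (fun ω' _ => hInt ω ω'))]
          exact Finset.sum_congr rfl fun ω _ =>
            MeasureTheory.integral_finset_sum _ (fun ω' _ => hInt ω ω')
      _ = ∑ ω ∈ S, ∑ ω' ∈ S, if ω = ω' then (1:ℂ) else 0 := by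
          apply Finset.sum_congr rfl; intro ω _
          apply Finset.sum_congr rfl; intro ω' _
          rw [cube_orth (ω - ω')]
          simp [sub_eq_zero]
      _ = (S.card : ℂ) := by
          simp [Finset.sum_ite_eq]
  have h3 : (∫ x in cube d, ((‖G x‖^2 : ℝ) : ℂ)) = ((∫ x in cube d, ‖G x‖^2 : ℝ) : ℂ) :=
    integral_ofReal
  rw [h3] at h2
  exact_mod_cast h2

lemma toReal_pos_of_one_le {p : ℝ≥0∞} (hp : 1 ≤ p) (h : p ≠ ∞) : 0 < p.toReal :=
  ENNReal.toReal_pos (fun h0 => by simp [h0] at hp) h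

lemma lpnorm_eq_norm (p : ℝ≥0∞) [Fact (1 ≤ p)] (x : Fin d → ℝ) :
    lpnorm p x = ‖(WithLp.equiv p (Fin d → ℝ)).symm x‖ := by
  rcases eq_or_ne p ∞ with h | h
  · subst h
    rw [lpnorm, if_pos rfl, PiLp.norm_eq_ciSup]
    simp [Real.norm_eq_abs]
  · rw [lpnorm, if_neg h, PiLp.norm_eq_sum (toReal_pos_of_one_le (Fact.out) h)]
    simp [Real.norm_eq_abs]

lemma lpnorm_nonneg (p : ℝ≥0∞) [Fact (1 ≤ p)] (x : Fin d → ℝ) : 0 ≤ lpnorm p x := by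
  rw [lpnorm_eq_norm]; exact norm_nonneg _

lemma lpnorm_zero (p : ℝ≥0∞) [Fact (1 ≤ p)] : lpnorm p (0 : Fin d → ℝ) = 0 := by
  rw [lpnorm_eq_norm]
  exact norm_zero

lemma lpnorm_add_le (p : ℝ≥0∞) [Fact (1 ≤ p)] (x y : Fin d → ℝ) :
    lpnorm p (x + y) ≤ lpnorm p x + lpnorm p y := by
  simp only [lpnorm_eq_norm]
  exact norm_add_le ((WithLp.equiv p (Fin d → ℝ)).symm x) ((WithLp.equiv p (Fin d → ℝ)).symm y)

lemma lpnorm_sum_le {α : Type*} (p : ℝ≥0∞) [Fact (1 ≤ p)] (T : Finset α) (f : α → Fin d → ℝ) :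
    lpnorm p (∑ k ∈ T, f k) ≤ ∑ k ∈ T, lpnorm p (f k) := by
  classical
  induction T using Finset.induction with
  | empty => simp [lpnorm_zero]
  | insert _ _ h ih =>
      rw [Finset.sum_insert h, Finset.sum_insert h]
      exact le_trans (lpnorm_add_le p _ _) (by linarith)

lemma lpnorm_smul (p : ℝ≥0∞) [Fact (1 ≤ p)] (t : ℝ) (x : Fin d → ℝ) :
    lpnorm p (t • x) = |t| * lpnorm p x := by
  simp only [lpnorm_eq_norm]
  rw [show (WithLp.equiv p (Fin d → ℝ)).symm (t • x)
      = t • (WithLp.equiv p (Fin d → ℝ)).symm x from rfl]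
  rw [norm_smul, Real.norm_eq_abs]

lemma l2norm_sq_eq (x : Fin d → ℝ) : lpnorm 2 x = (∑ i, |x i| ^ (2:ℝ)) ^ (1/2 : ℝ) := by
  rw [lpnorm, if_neg (by norm_num)]; norm_num

lemma abs_le_l2norm (x : Fin d → ℝ) (i : Fin d) : |x i| ≤ lpnorm 2 x := by
  rw [l2norm_sq_eq]
  have h1 : |x i| = (|x i| ^ (2:ℝ)) ^ (1/2 : ℝ) := by
    rw [← Real.rpow_mul (abs_nonneg _)]; norm_num
  rw [h1]
  apply Real.rpow_le_rpow (Real.rpow_nonneg (abs_nonneg _) _)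
  · exact Finset.single_le_sum (fun j _ => Real.rpow_nonneg (abs_nonneg _) _) (mem_univ i)
  · norm_num

lemma lpnorm_le_l2 (p : ℝ≥0∞) (hp : 2 ≤ p) (x : Fin d → ℝ) :
    lpnorm p x ≤ lpnorm 2 x := by
  have hS0 : (0:ℝ) ≤ ∑ i, |x i| ^ (2:ℝ) :=
    Finset.sum_nonneg fun j _ => Real.rpow_nonneg (abs_nonneg _) _
  have h2nn : 0 ≤ lpnorm 2 x := by rw [l2norm_sq_eq]; exact Real.rpow_nonneg hS0 _
  rcases eq_or_ne p ∞ with h | h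
  · subst h; rw [lpnorm, if_pos rfl]
    exact Real.iSup_le (fun i => abs_le_l2norm x i) h2nn
  · have ht2 : (2:ℝ) ≤ p.toReal := by
      have := ENNReal.toReal_le_toReal (by norm_num : (2:ℝ≥0∞) ≠ ∞) h |>.mpr hp
      simpa using this
    have ht : 0 < p.toReal := by linarith
    rw [lpnorm, if_neg h]
    set t := p.toReal
    have key : ∑ i, |x i| ^ t ≤ (∑ i, |x i| ^ (2:ℝ)) ^ (t / 2 : ℝ) := by
      set S := ∑ i, |x i| ^ (2:ℝ) with hS
      have step : ∀ i, |x i| ^ t ≤ |x i| ^ (2:ℝ) * (S ^ (1/2:ℝ)) ^ (t - 2) := by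
        intro i
        have hxi : |x i| ≤ S ^ (1/2:ℝ) := by
          rw [← l2norm_sq_eq]; exact abs_le_l2norm x i
        calc |x i| ^ t = |x i| ^ (2:ℝ) * |x i| ^ (t - 2) := by
              rw [← Real.rpow_add' (abs_nonneg _)] <;> ring_nf
              · linarith [ht]
            _ ≤ |x i| ^ (2:ℝ) * (S ^ (1/2:ℝ)) ^ (t - 2) := by
              apply mul_le_mul_of_nonneg_left _ (Real.rpow_nonneg (abs_nonneg _) _)
              exact Real.rpow_le_rpow (abs_nonneg _) hxi (by linarith)
      calc ∑ i, |x i| ^ t ≤ ∑ i, |x i| ^ (2:ℝ) * (S ^ (1/2:ℝ)) ^ (t - 2) :=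
            Finset.sum_le_sum fun i _ => step i
        _ = S * (S ^ (1/2:ℝ)) ^ (t - 2) := by rw [← Finset.sum_mul]
        _ = S ^ (t/2 : ℝ) := by
            rw [← Real.rpow_mul hS0,
              show (t/2 : ℝ) = 1 + (1/2)*(t-2) by ring,
              Real.rpow_add' hS0 (by intro hc; nlinarith), Real.rpow_one]
    calc (∑ i, |x i| ^ t) ^ (1/t : ℝ)
        ≤ ((∑ i, |x i| ^ (2:ℝ)) ^ (t/2 : ℝ)) ^ (1/t : ℝ) := by
          apply Real.rpow_le_rpow (Finset.sum_nonneg fun j _ => Real.rpow_nonneg (abs_nonneg _) _) key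
          positivity
      _ = lpnorm 2 x := by
          rw [← Real.rpow_mul hS0, l2norm_sq_eq]
          congr 1
          field_simp

lemma ball_int_finite (p : ℝ≥0∞) (hp : 1 ≤ p) (m : ℝ) :
    {ω : Fin d → ℤ | intPt ω ∈ lpBall d p m}.Finite := by
  have hM : ∀ ω ∈ {ω : Fin d → ℤ | intPt ω ∈ lpBall d p m}, ∀ i, ω i ∈ Set.Icc (-⌈m⌉) ⌈m⌉ := by
    intro ω hω i
    haveI : Fact (1 ≤ p) := ⟨hp⟩
    have h1 : |(ω i : ℝ)| ≤ m := by
      calc |(ω i : ℝ)| = |intPt ω i| := by simp [intPt]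
        _ ≤ lpnorm p (intPt ω) := by
            rcases eq_or_ne p ∞ with h | h
            · subst h; rw [lpnorm, if_pos rfl]
              exact le_ciSup (f := fun i => |intPt ω i|) (Set.Finite.bddAbove (Set.finite_range _)) i
            · have ht := toReal_pos_of_one_le hp h
              rw [lpnorm, if_neg h]
              have heq : |intPt ω i| = (|intPt ω i| ^ p.toReal) ^ (1 / p.toReal) := by
                rw [← Real.rpow_mul (abs_nonneg _), mul_one_div_cancel ht.ne', Real.rpow_one]
              rw [heq]
              apply Real.rpow_le_rpow (Real.rpow_nonneg (abs_nonneg _) _)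
              · exact Finset.single_le_sum (fun j _ => Real.rpow_nonneg (abs_nonneg _) _) (mem_univ i)
              · positivity
        _ ≤ m := hω
    rw [abs_le] at h1
    have hceil : m ≤ (⌈m⌉ : ℝ) := Int.le_ceil m
    constructor
    · exact_mod_cast (by push_cast; linarith [h1.1] : ((-⌈m⌉ : ℤ):ℝ) ≤ (ω i : ℝ))
    · exact_mod_cast le_trans h1.2 hceil
  exact Set.Finite.subset (Set.Finite.pi fun i => Set.finite_Icc (-⌈m⌉) ⌈m⌉)
    (fun ω hω i _ => hM ω hω i)

lemma eChar_zero_left (x : Fin d → ℝ) : eChar 0 x = 1 := by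
  rw [eChar, show dotR 0 x = 0 by simp [dotR]]
  simp

lemma eChar_sum_left {α : Type*} (T : Finset α) (g : α → Fin d → ℝ) (x : Fin d → ℝ) :
    eChar (∑ k ∈ T, g k) x = ∏ k ∈ T, eChar (g k) x := by
  classical
  induction T using Finset.induction with
  | empty => simp [eChar_zero_left]
  | insert _ _ h ih =>
      rw [Finset.sum_insert h, Finset.prod_insert h, eChar_add, ih]

lemma isTrigPoly_prod (Ω : Set (Fin d → ℝ)) (S : Finset (Fin d → ℤ)) {r : ℕ}
    (q : Fin r → Fin d → ℤ) (A B : Fin r → ℂ) (a0 : ℂ)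
    (hΩ : ∀ ω ∈ S, ∀ T : Finset (Fin r), intPt (ω + ∑ k ∈ T, q k) ∈ Ω) :
    IsTrigPoly Ω (fun x =>
      (a0 * ∑ ω ∈ S, eChar (intPt ω) x) * ∏ k, (A k * eChar (intPt (q k)) x + B k)) := by
  classical
  set coef : (Fin d → ℤ) → Finset (Fin r) → ℂ :=
    fun ω T => a0 * ((∏ k ∈ T, A k) * ∏ k ∈ Finset.univ \ T, B k) with hcoef
  set c : (Fin d → ℤ) → ℂ := fun ν => ∑ ω ∈ S, ∑ T ∈ (Finset.univ : Finset (Fin r)).powerset,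
    if ω + ∑ k ∈ T, q k = ν then coef ω T else 0 with hc
  set V : Finset (Fin d → ℤ) :=
    (S ×ˢ (Finset.univ : Finset (Fin r)).powerset).image
      (fun pr => pr.1 + ∑ k ∈ pr.2, q k) with hV
  have hsupp : ∀ ν, c ν ≠ 0 → ν ∈ V := by
    intro ν hν
    obtain ⟨ω, hω, hne⟩ := Finset.exists_ne_zero_of_sum_ne_zero hν
    obtain ⟨T, hT, hne2⟩ := Finset.exists_ne_zero_of_sum_ne_zero hne
    have hcond : ω + ∑ k ∈ T, q k = ν := by
      by_contra hcon
      rw [if_neg hcon] at hne2; exact hne2 rfl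
    exact Finset.mem_image.mpr ⟨(ω, T), Finset.mem_product.mpr ⟨hω, hT⟩, hcond⟩
  refine ⟨c, ?_, ?_, ?_⟩
  · exact Set.Finite.subset V.finite_toSet (fun ν hν => hsupp ν hν)
  · intro ν hν
    have := hsupp ν hν
    obtain ⟨⟨ω, T⟩, hmem, heq⟩ := Finset.mem_image.mp this
    rw [← heq]
    exact hΩ ω (Finset.mem_product.mp hmem).1 T
  · intro x
    have hts : ∀ ν ∉ V, c ν * Complex.exp ((2 * Real.pi * Complex.I) * (dotR (intPt ν) x : ℝ)) = 0 := by
      intro ν hν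
      have : c ν = 0 := by
        by_contra hcon; exact hν (hsupp ν hcon)
      rw [this, zero_mul]
    rw [tsum_eq_sum hts]
    have hE : ∀ ν : Fin d → ℤ,
        Complex.exp ((2 * Real.pi * Complex.I) * (dotR (intPt ν) x : ℝ)) = eChar (intPt ν) x := by
      intro ν; rfl
    simp_rw [hE]
    symm
    calc ∑ ν ∈ V, c ν * eChar (intPt ν) x
        = ∑ ν ∈ V, ∑ ω ∈ S, ∑ T ∈ (Finset.univ : Finset (Fin r)).powerset,
            (if ω + ∑ k ∈ T, q k = ν then coef ω T * eChar (intPt ν) x else 0) := by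
          apply Finset.sum_congr rfl; intro ν _
          rw [hc]
          rw [Finset.sum_mul]
          apply Finset.sum_congr rfl; intro ω _
          rw [Finset.sum_mul]
          apply Finset.sum_congr rfl; intro T _
          rw [ite_mul, zero_mul]
      _ = ∑ ω ∈ S, ∑ T ∈ (Finset.univ : Finset (Fin r)).powerset,
            ∑ ν ∈ V, (if ω + ∑ k ∈ T, q k = ν then coef ω T * eChar (intPt ν) x else 0) := by
          rw [Finset.sum_comm]
          apply Finset.sum_congr rfl; intro ω _
          rw [Finset.sum_comm]
      _ = ∑ ω ∈ S, ∑ T ∈ (Finset.univ : Finset (Fin r)).powerset,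
            coef ω T * eChar (intPt (ω + ∑ k ∈ T, q k)) x := by
          apply Finset.sum_congr rfl; intro ω hω
          apply Finset.sum_congr rfl; intro T hT
          rw [Finset.sum_ite_eq V (ω + ∑ k ∈ T, q k)
            (fun ν => coef ω T * eChar (intPt ν) x)]
          rw [if_pos (Finset.mem_image.mpr ⟨(ω, T), Finset.mem_product.mpr ⟨hω, hT⟩, rfl⟩)]
      _ = (a0 * ∑ ω ∈ S, eChar (intPt ω) x) * ∏ k, (A k * eChar (intPt (q k)) x + B k) := by
          rw [Finset.prod_add, mul_assoc, Finset.sum_mul_sum, Finset.mul_sum]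
          apply Finset.sum_congr rfl; intro ω hω
          rw [Finset.mul_sum]
          apply Finset.sum_congr rfl; intro T hT
          rw [intPt_add, eChar_add, intPt_sum, eChar_sum_left, Finset.prod_mul_distrib]
          ring

lemma sin_chord {s : ℝ} (h0 : 0 ≤ s) (h1 : s ≤ 1/4) :
    2 * Real.sqrt 2 * s ≤ Real.sin (Real.pi * s) := by
  have hc := strictConcaveOn_sin_Icc.concaveOn
  have hpi : (0:ℝ) < Real.pi := Real.pi_pos
  have key := hc.2 (Set.mem_Icc.mpr ⟨le_refl (0:ℝ), hpi.le⟩)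
    (show Real.pi/4 ∈ Set.Icc 0 Real.pi from Set.mem_Icc.mpr ⟨by positivity, by linarith⟩)
    (show (0:ℝ) ≤ 1 - 4*s by linarith) (show (0:ℝ) ≤ 4*s by linarith)
    (show (1 - 4*s) + 4*s = 1 by ring)
  simp only [smul_eq_mul, mul_zero, Real.sin_zero, zero_add, Real.sin_pi_div_four] at key
  rw [show 4*s*(Real.pi/4) = Real.pi*s by ring] at key
  calc 2 * Real.sqrt 2 * s = 4*s * (Real.sqrt 2/2) := by ring
    _ ≤ _ := key

lemma norm_one_sub_exp_aux (a : ℝ) :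
    ‖(1 : ℂ) - Complex.exp ((a:ℂ) * Complex.I)‖ = 2 * |Real.sin (a/2)| := by
  rw [Complex.exp_mul_I]
  have heq : (1 : ℂ) - (Complex.cos (a:ℂ) + Complex.sin (a:ℂ) * Complex.I)
      = Complex.mk (1 - Real.cos a) (- Real.sin a) := by
    apply Complex.ext <;>
      simp [Complex.cos_ofReal_re, Complex.sin_ofReal_re]
  rw [heq, Complex.norm_def, Complex.normSq_mk]
  have hs : Real.cos a = 2 * Real.cos (a/2)^2 - 1 := by
    have := Real.cos_two_mul (a/2); rw [show 2*(a/2) = a by ring] at this; exact this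
  have e1 : Real.sin a^2 + Real.cos a^2 = 1 := Real.sin_sq_add_cos_sq _
  have e2 : Real.sin (a/2)^2 + Real.cos (a/2)^2 = 1 := Real.sin_sq_add_cos_sq _
  have h3 : (1 - Real.cos a) * (1 - Real.cos a) + (- Real.sin a) * (- Real.sin a)
      = (2 * |Real.sin (a/2)|)^2 := by
    rw [show (2 * |Real.sin (a/2)|)^2 = 4 * Real.sin (a/2)^2 by rw [mul_pow, sq_abs]; ring]
    linear_combination e1 - 4*e2 - 2*hs
  rw [h3, Real.sqrt_sq (by positivity)]

lemma norm_one_sub_exp (s : ℝ) :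
    ‖(1 : ℂ) - Complex.exp ((2 * Real.pi * Complex.I) * (s:ℝ))‖ = 2 * |Real.sin (Real.pi * s)| := by
  have h1 : (2 * Real.pi * Complex.I) * (s:ℝ) = ((2 * Real.pi * s : ℝ) : ℂ) * Complex.I := by
    push_cast; ring
  rw [h1, norm_one_sub_exp_aux, show (2*Real.pi*s)/2 = Real.pi * s by ring]

lemma norm_exp_real_mul_I (t : ℝ) : ‖Complex.exp ((2 * Real.pi * Complex.I) * (t:ℝ))‖ = 1 := by
  have h1 : (2 * Real.pi * Complex.I) * (t:ℝ) = ((2 * Real.pi * t : ℝ) : ℂ) * Complex.I := by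
    push_cast; ring
  rw [h1, Complex.norm_exp_ofReal_mul_I]

-- lower bound for ‖1 - e(s)‖ when 0 < |s| ≤ 1/4
lemma norm_one_sub_exp_ge {s : ℝ} (hs : |s| ≤ 1/4) :
    4 * Real.sqrt 2 * |s| ≤ ‖(1 : ℂ) - Complex.exp ((2 * Real.pi * Complex.I) * (s:ℝ))‖ := by
  rw [norm_one_sub_exp]
  rcases abs_cases s with ⟨h1, h2⟩ | ⟨h1, h2⟩
  · rw [h1] at hs ⊢
    have := sin_chord (by linarith) hs
    calc 4 * Real.sqrt 2 * s = 2 * (2 * Real.sqrt 2 * s) := by ring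
      _ ≤ 2 * Real.sin (Real.pi * s) := by linarith
      _ ≤ 2 * |Real.sin (Real.pi * s)| := by
          have := le_abs_self (Real.sin (Real.pi * s)); linarith
  · rw [h1] at hs ⊢
    have := sin_chord (by linarith : (0:ℝ) ≤ -s) hs
    have hsin : Real.sin (Real.pi * (-s)) = - Real.sin (Real.pi * s) := by
      rw [show Real.pi * (-s) = -(Real.pi * s) by ring, Real.sin_neg]
    rw [hsin] at this
    calc 4 * Real.sqrt 2 * (-s) = 2 * (2 * Real.sqrt 2 * (-s)) := by ring
      _ ≤ 2 * (- Real.sin (Real.pi * s)) := by linarith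
      _ ≤ 2 * |Real.sin (Real.pi * s)| := by
          have := neg_abs_le (Real.sin (Real.pi * s)); linarith

lemma sqrt_two_pow (r : ℕ) : Real.sqrt (2^r) = Real.sqrt 2 ^ r := by
  induction r with
  | zero => simp
  | succ k ih => rw [pow_succ, pow_succ, Real.sqrt_mul (by positivity), ih]

lemma dotR_smul (t : ℝ) (a x : Fin d → ℝ) : dotR (t • a) x = t * dotR a x := by
  simp [dotR, Finset.mul_sum]; apply Finset.sum_congr rfl; intros; ring

/-- local Lagrange interpolant from a hyperplane decomposition with
integer normals, trigonometric polynomial version. -/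
theorem statement19 (d : ℕ) (hd : 2 ≤ d)
    (p : ℝ≥0∞) (hp : 2 ≤ p)
    (U : Finset (Fin d → ℝ)) (hU0 : (0 : Fin d → ℝ) ∈ U) (hUc : ∀ u ∈ U, u ∈ cube d)
    (r : ℕ) (θ : Fin r → Fin d → ℝ) (cv : Fin r → ℝ)
    (hθ : ∀ k, lpnorm 2 (θ k) = 1) (hcv : ∀ k, cv k ≠ 0)
    (hcover : ∀ u ∈ U, u ≠ 0 → ∃ k, dotR (θ k) u = cv k)
    (n : ℝ) (hn : 0 < n)
    (hη : ∀ k, |cv k| ≤ ((r : ℝ) + 1) / (4 * n))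
    (qv : Fin r → Fin d → ℤ)
    (hqnormal : ∀ k, ∃ t : ℝ, t ≠ 0 ∧ intPt (qv k) = t • θ k)
    (hqnorm : ∀ k, lpnorm 2 (intPt (qv k)) ≤ n / ((r : ℝ) + 1)) :
    ∃ f : (Fin d → ℝ) → ℂ,
      IsTrigPoly (lpBall d p n) f ∧ f 0 = 1 ∧
      (∀ u ∈ U, u ≠ 0 → f u = 0) ∧
      torusL2 f ≤ Real.sqrt (2 ^ r / (intCard (lpBall d p (n / ((r : ℝ) + 1))) : ℝ)) *
        ∏ k, 1 / (4 * lpnorm 2 (intPt (qv k)) * |cv k|) := by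
  classical
  haveI hf1 : Fact (1 ≤ p) := ⟨le_trans (by norm_num) hp⟩
  haveI hf2 : Fact ((1:ℝ≥0∞) ≤ 2) := ⟨by norm_num⟩
  have hr1 : (0:ℝ) < (r:ℝ) + 1 := by positivity
  set m : ℝ := n / ((r:ℝ) + 1) with hm
  have hm0 : 0 < m := by positivity
  choose t ht0 htq using hqnormal
  set s : Fin r → ℝ := fun k => t k * cv k with hs
  have hqnorm2 : ∀ k, lpnorm 2 (intPt (qv k)) = |t k| := by
    intro k; rw [htq k, lpnorm_smul 2 (t k) (θ k), hθ k, mul_one]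
  have hq_pos : ∀ k, 0 < lpnorm 2 (intPt (qv k)) := fun k => by
    rw [hqnorm2]; exact abs_pos.mpr (ht0 k)
  have hs_ne : ∀ k, s k ≠ 0 := fun k => mul_ne_zero (ht0 k) (hcv k)
  have hs_abs : ∀ k, |s k| = lpnorm 2 (intPt (qv k)) * |cv k| := by
    intro k; rw [hqnorm2, hs]; exact abs_mul _ _
  have hs_pos : ∀ k, 0 < |s k| := fun k => abs_pos.mpr (hs_ne k)
  have hs_le : ∀ k, |s k| ≤ 1/4 := by
    intro k
    rw [hs_abs k]
    calc lpnorm 2 (intPt (qv k)) * |cv k| ≤ (n/((r:ℝ)+1)) * (((r:ℝ)+1)/(4*n)) :=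
          mul_le_mul (hqnorm k) (hη k) (abs_nonneg _) (by positivity)
      _ = 1/4 := by field_simp
  set e : Fin r → ℂ := fun k => Complex.exp ((2 * Real.pi * Complex.I) * ((s k : ℝ) : ℂ)) with he
  have he_norm : ∀ k, ‖e k‖ = 1 := fun k => norm_exp_real_mul_I (s k)
  have he_ne : ∀ k, e k ≠ 1 := by
    intro k h1
    rw [Complex.exp_eq_one_iff] at h1
    obtain ⟨z, hz⟩ := h1
    have h2πI : (2 * Real.pi * Complex.I : ℂ) ≠ 0 := by
      refine mul_ne_zero (mul_ne_zero two_ne_zero ?_) Complex.I_ne_zero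
      exact_mod_cast Complex.ofReal_ne_zero.mpr Real.pi_ne_zero
    have hsz : ((s k : ℝ) : ℂ) = (z : ℂ) := by
      rw [mul_comm (z:ℂ) (2 * Real.pi * Complex.I)] at hz
      exact mul_left_cancel₀ h2πI hz
    have hsz' : s k = (z : ℝ) := by exact_mod_cast hsz
    rcases eq_or_ne z 0 with h0 | h0
    · rw [h0] at hsz'; exact hs_ne k (by simpa using hsz')
    · have : (1:ℝ) ≤ |(z:ℝ)| := by exact_mod_cast Int.one_le_abs h0
      rw [← hsz'] at this
      linarith [hs_le k]
  have hone_ne : ∀ k, (1:ℂ) - e k ≠ 0 := fun k => sub_ne_zero.mpr (Ne.symm (he_ne k))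
  have hone_pos : ∀ k, 0 < ‖(1:ℂ) - e k‖ := fun k => norm_pos_iff.mpr (hone_ne k)
  have hone_ge : ∀ k, 4 * Real.sqrt 2 * |s k| ≤ ‖(1:ℂ) - e k‖ := by
    intro k
    exact norm_one_sub_exp_ge (hs_le k)
  -- the finite set of integer frequencies of the small ball
  have hfin := ball_int_finite (d := d) p hf1.out m
  set S : Finset (Fin d → ℤ) := hfin.toFinset with hSdef
  set N : ℕ := S.card with hNdef
  have h0S : (0 : Fin d → ℤ) ∈ S := by
    rw [hSdef, Set.Finite.mem_toFinset]
    show lpnorm p (intPt 0) ≤ m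
    have : intPt (0 : Fin d → ℤ) = (0 : Fin d → ℝ) := by funext i; simp [intPt]
    rw [this, lpnorm_zero]
    exact hm0.le
  have hN0 : 0 < N := Finset.card_pos.mpr ⟨0, h0S⟩
  have hNR : (0:ℝ) < N := by exact_mod_cast hN0
  have hcard : (intCard (lpBall d p m) : ℝ) = (N : ℝ) := by
    rw [intCard, Set.ncard_eq_toFinset_card _ hfin]
  -- components
  set A : Fin r → ℂ := fun k => ((1:ℂ) - e k)⁻¹ with hA
  set B : Fin r → ℂ := fun k => -(e k) * ((1:ℂ) - e k)⁻¹ with hB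
  set g : (Fin d → ℝ) → ℂ := fun x => ((N:ℂ))⁻¹ * ∑ ω ∈ S, eChar (intPt ω) x with hg
  set f : (Fin d → ℝ) → ℂ :=
    fun x => g x * ∏ k, (A k * eChar (intPt (qv k)) x + B k) with hf
  have hmem_lpnorm : ∀ ω ∈ S, lpnorm p (intPt ω) ≤ m := by
    intro ω hω
    rw [hSdef, Set.Finite.mem_toFinset] at hω
    exact hω
  refine ⟨f, ?_, ?_, ?_, ?_⟩
  · -- trig poly
    have := isTrigPoly_prod (lpBall d p n) S qv A B ((N:ℂ))⁻¹ ?_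
    · convert this using 2
    · intro ω hω T
      show lpnorm p (intPt (ω + ∑ k ∈ T, qv k)) ≤ n
      rw [intPt_add, intPt_sum]
      calc lpnorm p (intPt ω + ∑ k ∈ T, intPt (qv k))
          ≤ lpnorm p (intPt ω) + lpnorm p (∑ k ∈ T, intPt (qv k)) := lpnorm_add_le p _ _
        _ ≤ m + ∑ k ∈ T, lpnorm p (intPt (qv k)) :=
            add_le_add (hmem_lpnorm ω hω) (lpnorm_sum_le p T _)
        _ ≤ m + ∑ k ∈ T, m := by
            refine add_le_add_right (Finset.sum_le_sum fun k _ => ?_) m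
            exact le_trans (lpnorm_le_l2 p hp _) (hqnorm k)
        _ ≤ m + r * m := by
            have : (T.card : ℝ) ≤ (r : ℝ) := by
              exact_mod_cast le_trans (Finset.card_le_card (Finset.subset_univ T))
                (le_of_eq (Finset.card_fin r))
            rw [Finset.sum_const, nsmul_eq_mul]
            have := mul_le_mul_of_nonneg_right this hm0.le
            linarith
        _ = n := by rw [hm]; field_simp; ring
  · -- f 0 = 1
    have hE0 : ∀ ν : Fin d → ℤ, eChar (intPt ν) (0 : Fin d → ℝ) = 1 :=
      fun ν => eChar_zero_right _
    rw [hf, hg]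
    simp only [hE0]
    rw [Finset.sum_const, nsmul_eq_mul, mul_one]
    have h1 : ((N:ℂ))⁻¹ * (N:ℂ) = 1 := by
      rw [inv_mul_cancel₀]
      exact_mod_cast hN0.ne'
    have h2 : ∀ k, A k * 1 + B k = 1 := by
      intro k
      rw [hA, hB, mul_one]
      have heq : ((1:ℂ) - e k)⁻¹ + -(e k) * ((1:ℂ) - e k)⁻¹
          = ((1:ℂ) - e k) * ((1:ℂ) - e k)⁻¹ := by ring
      rw [heq, mul_inv_cancel₀ (hone_ne k)]
    rw [h1]
    rw [Finset.prod_congr rfl fun k _ => h2 k]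
    simp
  · -- vanishing on U \ {0}
    intro u hu hu0
    obtain ⟨k, hk⟩ := hcover u hu hu0
    rw [hf]
    apply mul_eq_zero.mpr
    right
    apply Finset.prod_eq_zero (mem_univ k)
    have hEu : eChar (intPt (qv k)) u = e k := by
      rw [eChar, he]
      congr 1
      rw [htq k, dotR_smul, hk]
    rw [hEu, hA, hB]
    field_simp
    ring
  · -- L² bound
    set Q : Fin r → ℝ := fun k => 4 * lpnorm 2 (intPt (qv k)) * |cv k| with hQ
    have hQpos : ∀ k, 0 < Q k := by
      intro k
      rw [hQ]
      exact mul_pos (mul_pos (by norm_num) (hq_pos k)) (abs_pos.mpr (hcv k))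
    set M : ℝ := ∏ k, Real.sqrt 2 / Q k with hM
    have hM0 : 0 ≤ M := Finset.prod_nonneg fun k _ => le_of_lt (div_pos (by positivity) (hQpos k))
    have hhk : ∀ k x, ‖A k * eChar (intPt (qv k)) x + B k‖ ≤ Real.sqrt 2 / Q k := by
      intro k x
      have heq : A k * eChar (intPt (qv k)) x + B k
          = (eChar (intPt (qv k)) x - e k) * ((1:ℂ) - e k)⁻¹ := by
        rw [hA, hB]; ring
      rw [heq, norm_mul, norm_inv]
      have h1 : ‖eChar (intPt (qv k)) x - e k‖ ≤ 2 := by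
        calc ‖eChar (intPt (qv k)) x - e k‖ ≤ ‖eChar (intPt (qv k)) x‖ + ‖e k‖ :=
              norm_sub_le _ _
          _ = 2 := by rw [norm_eChar, he_norm]; norm_num
      have h2 : ‖(1:ℂ) - e k‖⁻¹ ≤ (4 * Real.sqrt 2 * |s k|)⁻¹ := by
        apply inv_anti₀ _ (hone_ge k)
        have := hs_pos k
        positivity
      calc ‖eChar (intPt (qv k)) x - e k‖ * ‖(1:ℂ) - e k‖⁻¹
          ≤ 2 * (4 * Real.sqrt 2 * |s k|)⁻¹ := by
            apply mul_le_mul h1 h2 (by positivity) (by norm_num)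
        _ = Real.sqrt 2 / Q k := by
            rw [hQ, hs_abs k]
            have hsqrt2 : Real.sqrt 2 * Real.sqrt 2 = 2 :=
              Real.mul_self_sqrt (by norm_num)
            have hq := hq_pos k
            have hcv' := abs_pos.mpr (hcv k)
            have hsqrt2pos : (0:ℝ) < Real.sqrt 2 := by positivity
            have hqne := hq.ne'
            have hcvne := hcv'.ne'
            field_simp
            linear_combination (-1 : ℝ) * hsqrt2
    have hfg : ∀ x, ‖f x‖^2 ≤ M^2 * ‖g x‖^2 := by
      intro x
      have h1 : ‖f x‖ = ‖g x‖ * ∏ k, ‖A k * eChar (intPt (qv k)) x + B k‖ := by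
        rw [hf, norm_mul, norm_prod]
      have h2 : ∏ k, ‖A k * eChar (intPt (qv k)) x + B k‖ ≤ M :=
        Finset.prod_le_prod (fun k _ => norm_nonneg _) (fun k _ => hhk k x)
      have h3 : ‖f x‖ ≤ ‖g x‖ * M :=
        h1 ▸ mul_le_mul_of_nonneg_left h2 (norm_nonneg _)
      calc ‖f x‖^2 ≤ (‖g x‖ * M)^2 := by
            apply pow_le_pow_left₀ (norm_nonneg _) h3
        _ = M^2 * ‖g x‖^2 := by ring
    -- integrability of dominating function
    have hgcont : Continuous g := by
      rw [hg]
      apply Continuous.mul continuous_const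
      exact continuous_finset_sum _ fun ω _ => continuous_eChar _
    have hdom : IntegrableOn (fun x => M^2 * ‖g x‖^2) (cube d) := by
      apply integrableOn_cube_of_continuous
      exact continuous_const.mul ((hgcont.norm).pow 2)
    have hint1 : ∫ x in cube d, ‖f x‖^2 ≤ ∫ x in cube d, M^2 * ‖g x‖^2 := by
      apply MeasureTheory.integral_mono_of_nonneg
      · exact Filter.Eventually.of_forall fun x => by positivity
      · exact hdom
      · exact Filter.Eventually.of_forall fun x => hfg x
    have hgval : ∀ x, ‖g x‖^2 = ((N:ℝ)⁻¹)^2 * ‖∑ ω ∈ S, eChar (intPt ω) x‖^2 := by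
      intro x
      rw [hg, norm_mul, norm_inv, mul_pow]
      norm_num
    have hint2 : ∫ x in cube d, M^2 * ‖g x‖^2 = M^2 * (N:ℝ)⁻¹ := by
      have : (fun x => M^2 * ‖g x‖^2)
          = fun x => (M^2 * ((N:ℝ)⁻¹)^2) * ‖∑ ω ∈ S, eChar (intPt ω) x‖^2 := by
        funext x; rw [hgval x]; ring
      rw [this, MeasureTheory.integral_const_mul, integral_dirichlet_sq, ← hNdef]
      rw [mul_assoc, sq ((N:ℝ)⁻¹), mul_assoc, inv_mul_cancel₀ hNR.ne', mul_one]
    have hfinal : ∫ x in cube d, ‖f x‖^2 ≤ M^2 * (N:ℝ)⁻¹ := hint2 ▸ hint1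
    rw [torusL2]
    have hle : Real.sqrt (∫ x in cube d, ‖f x‖^2) ≤ Real.sqrt (M^2 * (N:ℝ)⁻¹) :=
      Real.sqrt_le_sqrt hfinal
    apply le_trans hle
    -- identify the right-hand side
    have hMsplit : M = Real.sqrt 2 ^ r * ∏ k, 1 / Q k := by
      rw [hM]
      rw [show (fun k => Real.sqrt 2 / Q k) = fun k => Real.sqrt 2 * (1 / Q k) by
        funext k; field_simp]
      rw [Finset.prod_mul_distrib, Finset.prod_const, Finset.card_fin]
    have hsqrtM : Real.sqrt (M^2 * (N:ℝ)⁻¹) = M * Real.sqrt ((N:ℝ)⁻¹) := by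
      rw [Real.sqrt_mul (sq_nonneg M), Real.sqrt_sq hM0]
    rw [hsqrtM, hMsplit]
    have hRHS : Real.sqrt (2 ^ r / (intCard (lpBall d p m) : ℝ))
        = Real.sqrt 2 ^ r * Real.sqrt ((N:ℝ)⁻¹) := by
      rw [hcard, div_eq_mul_inv, Real.sqrt_mul (by positivity), sqrt_two_pow]
    rw [hRHS]
    have hQdef : ∀ k, (1:ℝ) / (4 * lpnorm 2 (intPt (qv k)) * |cv k|) = 1 / Q k := by
      intro k; rw [hQ]
    rw [show (∏ k, 1 / (4 * lpnorm 2 (intPt (qv k)) * |cv k|)) = ∏ k, 1 / Q k from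
      Finset.prod_congr rfl fun k _ => hQdef k]
    exact le_of_eq (by ring)


end NF
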